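/- For the star K_{1,n-1} with unit edge lengths, any hierarchical clustering formed by recursively splitting the tree on its edges (so each cluster at each level is a connected subtree, and one split removes a single leaf at a time) has total spanning-tree weight Ω(n²), whereas there exists a hierarchical clustering (balanced binary splitting of the leaves) with total weight O(n log n). -/
import Mathlib


open Finset

/-- The minimum spanning tree length of a subset `S` of the points of the star
`K_{1,n-1}` with unit edge lengths, where point `0` is the center: in the induced
metric, the center is at distance `1` from each leaf and leaves are at distance `2`
from each other. -/
def mstStar (n : ℕ) (S : Finset (Fin n)) : ℕ :=
  if hn : n = 0 then 0
  else if S.card ≤ 1 then 0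
  else if (⟨0, Nat.pos_of_ne_zero hn⟩ : Fin n) ∈ S then S.card - 1
  else 2 * (S.card - 1)

/-- Hierarchical clusterings of a finite set of points, indexed by the cluster of all
its points: a binary tree whose leaves are singletons, each internal node merging two
disjoint clusters. -/
inductive HClust (n : ℕ) : Finset (Fin n) → Type
  | single (x : Fin n) : HClust n {x}
  | merge {A B : Finset (Fin n)} (hd : Disjoint A B)
      (l : HClust n A) (r : HClust n B) : HClust n (A ∪ B)

/-- The cost of a hierarchical clustering of points of the star `K_{1,n-1}`: the sum
over all clusters of the minimum spanning tree length of the cluster. -/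
def HClust.cost : {n : ℕ} → {S : Finset (Fin n)} → HClust n S → ℕ
  | _, _, .single _ => 0
  | n, _, .merge (A := A) (B := B) _ l r => mstStar n (A ∪ B) + l.cost + r.cost

/-- A hierarchical clustering is formed by recursively splitting the star on its edges
iff each cluster is split by removing a single leaf at a time (so each cluster at each
level is a connected subtree of the star). -/
def HClust.EdgeSplit : {n : ℕ} → {S : Finset (Fin n)} → HClust n S → Prop
  | _, _, .single _ => True
  | _, _, .merge (A := A) (B := B) _ l r =>
      (A.card = 1 ∨ B.card = 1) ∧ l.EdgeSplit ∧ r.EdgeSplit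

lemma le_mstStar (n : ℕ) (S : Finset (Fin n)) : S.card - 1 ≤ mstStar n S := by
  unfold mstStar
  split_ifs with h1 h2 h3
  · subst h1; have : S = ∅ := Subsingleton.elim _ _; simp [this]
  all_goals omega

lemma mstStar_le (n : ℕ) (S : Finset (Fin n)) : mstStar n S ≤ 2 * (S.card - 1) := by
  unfold mstStar; split_ifs <;> omega

lemma edgeSplit_cost {n : ℕ} {S : Finset (Fin n)} (hc : HClust n S) (he : hc.EdgeSplit) :
    S.card * (S.card - 1) ≤ 2 * hc.cost := by
  induction hc with
  | single x => simp [HClust.cost]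
  | @merge A B hd l r ihl ihr =>
    simp only [HClust.EdgeSplit] at he
    obtain ⟨h1, hl, hr⟩ := he
    have cl := ihl hl
    have cr := ihr hr
    have hcard : (A ∪ B).card = A.card + B.card := Finset.card_union_of_disjoint hd
    have hm := le_mstStar n (A ∪ B)
    rw [hcard] at hm
    simp only [HClust.cost]
    rw [hcard]
    rcases h1 with h | h
    · rcases Nat.eq_zero_or_pos B.card with h0 | h0
      · rw [h, h0]; simp
      · obtain ⟨b, hb⟩ : ∃ b, B.card = b + 1 := ⟨B.card - 1, by omega⟩
        rw [h, hb] at hm ⊢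
        rw [hb] at cr
        have cr' : (b + 1) * b ≤ 2 * r.cost := by simpa using cr
        have hm' : b + 1 ≤ mstStar n (A ∪ B) := by omega
        have hg : 1 + (b + 1) - 1 = b + 1 := by omega
        rw [hg]
        nlinarith [cr', hm']
    · rcases Nat.eq_zero_or_pos A.card with h0 | h0
      · rw [h, h0]; simp
      · obtain ⟨a, ha⟩ : ∃ a, A.card = a + 1 := ⟨A.card - 1, by omega⟩
        rw [h, ha] at hm ⊢
        rw [ha] at cl
        have cl' : (a + 1) * a ≤ 2 * l.cost := by simpa using cl
        have hm' : a + 1 ≤ mstStar n (A ∪ B) := by omega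
        have hg : a + 1 + 1 - 1 = a + 1 := by omega
        rw [hg]
        nlinarith [cl', hm']

lemma bal_exists (n : ℕ) : ∀ m : ℕ, ∀ l : List (Fin n), l.Nodup → l.length = m → l ≠ [] →
    ∃ hc : HClust n l.toFinset, hc.cost ≤ 2 * m * Nat.clog 2 m := by
  intro m
  induction m using Nat.strong_induction_on with
  | _ m ih =>
    intro l hnd hlen hne
    rcases lt_or_ge m 2 with hm | hm
    · -- m = 1
      have hm1 : m = 1 := by
        rcases m with _ | m
        · simp at hlen; exact absurd hlen hne
        · omega
      obtain ⟨x, rfl⟩ := List.length_eq_one_iff.mp (hlen.trans hm1)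
      have hfin : ([x] : List (Fin n)).toFinset = {x} := by simp
      rw [hfin]
      exact ⟨.single x, by simp [HClust.cost, hm1]⟩
    · -- m ≥ 2; split
      set k := m / 2 with hk
      have hk1 : 1 ≤ k := by omega
      have hkm : k < m := by omega
      have hlt : (l.take k).length = k := by
        rw [List.length_take]; omega
      have hld : (l.drop k).length = m - k := by
        rw [List.length_drop]; omega
      have hta : l.take k ++ l.drop k = l := List.take_append_drop k l
      have hndt : (l.take k).Nodup := (List.take_sublist k l).nodup hnd
      have hndd : (l.drop k).Nodup := (List.drop_sublist k l).nodup hnd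
      have hdisj : Disjoint (l.take k).toFinset (l.drop k).toFinset := by
        rw [List.disjoint_toFinset_iff_disjoint]
        have := hta ▸ hnd
        exact List.disjoint_of_nodup_append this
      have hunion : l.toFinset = (l.take k).toFinset ∪ (l.drop k).toFinset := by
        conv_lhs => rw [← hta]
        exact List.toFinset_append
      have hnt : l.take k ≠ [] := by
        intro h; rw [h] at hlt; simp at hlt; omega
      have hnd2 : l.drop k ≠ [] := by
        intro h; rw [h] at hld; simp at hld; omega
      obtain ⟨lc, hlc⟩ := ih k hkm (l.take k) hndt hlt hnt
      obtain ⟨rc, hrc⟩ := ih (m - k) (by omega) (l.drop k) hndd hld hnd2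
      rw [hunion]
      refine ⟨.merge hdisj lc rc, ?_⟩
      simp only [HClust.cost]
      have hcardu : ((l.take k).toFinset ∪ (l.drop k).toFinset).card = m := by
        rw [← hunion, List.toFinset_card_of_nodup hnd, hlen]
      have hmst : mstStar n ((l.take k).toFinset ∪ (l.drop k).toFinset) ≤ 2 * (m - 1) := by
        have := mstStar_le n ((l.take k).toFinset ∪ (l.drop k).toFinset)
        rw [hcardu] at this; exact this
      have hc1 : Nat.clog 2 m = Nat.clog 2 ((m + 1) / 2) + 1 :=
        Nat.clog_of_two_le (by norm_num) hm
      have hceil : m - k = (m + 1) / 2 := by omega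
      have hcd : Nat.clog 2 (m - k) = Nat.clog 2 m - 1 := by
        rw [hceil]; omega
      have hct : Nat.clog 2 k ≤ Nat.clog 2 m - 1 := by
        have : Nat.clog 2 k ≤ Nat.clog 2 (m - k) :=
          Nat.clog_mono_right 2 (by omega)
        omega
      have hcpos : 1 ≤ Nat.clog 2 m := by omega
      obtain ⟨c, hc⟩ : ∃ c, Nat.clog 2 m = c + 1 := ⟨Nat.clog 2 m - 1, by omega⟩
      rw [hc] at hcd hct ⊢
      simp only [Nat.add_sub_cancel] at hcd hct
      have h1 : lc.cost ≤ 2 * k * c := le_trans hlc (by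
        apply Nat.mul_le_mul_left; exact hct)
      have h2 : rc.cost ≤ 2 * (m - k) * c := le_trans hrc (by
        apply Nat.mul_le_mul_left; omega)
      have hsum : 2 * k * c + 2 * (m - k) * c = 2 * m * c := by
        have hkk : k + (m - k) = m := by omega
        calc 2 * k * c + 2 * (m - k) * c = 2 * (k + (m - k)) * c := by ring
          _ = 2 * m * c := by rw [hkk]
      calc mstStar n ((l.take k).toFinset ∪ (l.drop k).toFinset) + lc.cost + rc.cost
          ≤ 2 * (m - 1) + (2 * k * c + 2 * (m - k) * c) := by omega
        _ = 2 * (m - 1) + 2 * m * c := by rw [hsum]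
        _ ≤ 2 * m + 2 * m * c := by omega
        _ = 2 * m * (c + 1) := by ring

lemma clog_le_two_logb (n : ℕ) (hn : 2 ≤ n) :
    ((Nat.clog 2 n : ℝ)) ≤ 2 * Real.logb 2 n := by
  have hc1 : 1 ≤ Nat.clog 2 n := Nat.clog_pos (by norm_num) hn
  have hpow : 2 ^ (Nat.clog 2 n - 1) < n := Nat.pow_pred_clog_lt_self (by norm_num) hn
  have hle : ((2:ℝ)) ^ (Nat.clog 2 n - 1) ≤ (n : ℝ) := by
    exact_mod_cast hpow.le
  have h1 : ((Nat.clog 2 n - 1 : ℕ) : ℝ) ≤ Real.logb 2 n := by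
    have := Real.logb_le_logb_of_le (b := 2) (by norm_num) (by positivity) hle
    rwa [Real.logb_pow, Real.logb_self_eq_one (b := 2) (by norm_num), mul_one] at this
  have h2 : (1:ℝ) ≤ Real.logb 2 n := by
    have := Real.logb_le_logb_of_le (b := 2) (by norm_num) (by norm_num)
      (by exact_mod_cast hn : (2:ℝ) ≤ n)
    rwa [Real.logb_self_eq_one (b := 2) (by norm_num)] at this
  have h3 : ((Nat.clog 2 n - 1 : ℕ) : ℝ) = (Nat.clog 2 n : ℝ) - 1 := by
    push_cast [hc1]; ring
  linarith [h3 ▸ h1]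

/-- For the star `K_{1,n-1}` with unit edge lengths, any hierarchical clustering formed
by recursively splitting the tree on its edges has total spanning-tree weight `Ω(n²)`,
whereas some hierarchical clustering (balanced binary splitting) has total weight
`O(n log n)`. -/
theorem star_edge_split_quadratic_and_balanced_nlogn :
    (∃ c : ℝ, 0 < c ∧ ∀ n : ℕ, 2 ≤ n → ∀ hc : HClust n Finset.univ,
      hc.EdgeSplit → c * (n : ℝ) ^ 2 ≤ (hc.cost : ℝ)) ∧
    (∃ C : ℝ, 0 < C ∧ ∀ n : ℕ, 2 ≤ n → ∃ hc : HClust n Finset.univ,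
      (hc.cost : ℝ) ≤ C * (n : ℝ) * Real.logb 2 (n : ℝ)) := by
  constructor
  · refine ⟨1/4, by norm_num, ?_⟩
    intro n hn hc he
    have h := edgeSplit_cost hc he
    have hcard : (Finset.univ : Finset (Fin n)).card = n := by simp
    rw [hcard] at h
    have h' : (n : ℝ) * ((n : ℝ) - 1) ≤ 2 * (hc.cost : ℝ) := by
      have h2 := (Nat.cast_le (α := ℝ)).mpr h
      push_cast [Nat.cast_sub (by omega : 1 ≤ n)] at h2
      linarith [h2]
    have hn' : (2 : ℝ) ≤ (n : ℝ) := by exact_mod_cast hn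
    nlinarith [h', hn']
  · refine ⟨4, by norm_num, ?_⟩
    intro n hn
    have hne : (Finset.univ : Finset (Fin n)).toList ≠ [] := by
      intro h
      have := congrArg List.length h
      simp [Finset.length_toList] at this
      omega
    have hlen : (Finset.univ : Finset (Fin n)).toList.length = n := by
      simp [Finset.length_toList]
    have hbe := bal_exists n n (Finset.univ : Finset (Fin n)).toList
      (Finset.nodup_toList _) hlen hne
    rw [Finset.toList_toFinset] at hbe
    obtain ⟨hc, hco⟩ := hbe
    refine ⟨hc, ?_⟩
    have h1 : (hc.cost : ℝ) ≤ 2 * (n : ℝ) * (Nat.clog 2 n : ℝ) := by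
      exact_mod_cast (Nat.cast_le (α := ℝ)).mpr hco
    have h2 := clog_le_two_logb n hn
    have hn0 : (0 : ℝ) ≤ (n : ℝ) := by positivity
    nlinarith [h1, h2, hn0]
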